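/- Let s be a positive integer and define a_s(n) as the n-th coefficient of Δ^{(9^s-1)/8}. If a_s(n) ≢ 0 (mod 3), then n ≡ 1 (mod 3). -/

import Mathlib

open PowerSeries Finset

/-- `Δ = q·∏_{k≥1}(1-q^k)^{24}` over `ℤ`, defined coefficientwise via stabilized
partial products. -/
noncomputable def Delta : PowerSeries ℤ :=
  PowerSeries.mk fun n =>
    PowerSeries.coeff n
      (PowerSeries.X * ∏ k ∈ Finset.range (n + 1), (1 - (PowerSeries.X : PowerSeries ℤ) ^ (k + 1)) ^ 24)

/-- Ramanujan's tau function: the `n`-th coefficient of `Δ`. -/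
noncomputable def tau (n : ℕ) : ℤ := PowerSeries.coeff n Delta

/-- `a_s(n)`: the `n`-th coefficient of `Δ^{(9^s-1)/8}`. -/
noncomputable def aCoeff (s n : ℕ) : ℤ :=
  PowerSeries.coeff n (Delta ^ ((9 ^ s - 1) / 8))

namespace DeltaAux

instance : CharP (PowerSeries (ZMod 3)) 3 :=
  charP_of_injective_ringHom (PowerSeries.C_injective) 3

/-- Support of `f` lies in residue class `a` mod 3. -/
def Supp (f : PowerSeries (ZMod 3)) (a : ZMod 3) : Prop :=
  ∀ n : ℕ, PowerSeries.coeff n f ≠ 0 → (n : ZMod 3) = a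

lemma supp_mul {f g : PowerSeries (ZMod 3)} {a b : ZMod 3}
    (hf : Supp f a) (hg : Supp g b) : Supp (f * g) (a + b) := by
  intro n hn
  rw [PowerSeries.coeff_mul] at hn
  obtain ⟨p, hp, hne⟩ := Finset.exists_ne_zero_of_sum_ne_zero hn
  have h1 := hf p.1 (left_ne_zero_of_mul hne)
  have h2 := hg p.2 (right_ne_zero_of_mul hne)
  have hpn : p.1 + p.2 = n := Finset.HasAntidiagonal.mem_antidiagonal.mp hp
  rw [← hpn] at *
  push_cast
  rw [h1, h2]

lemma supp_pow {f : PowerSeries (ZMod 3)} {a : ZMod 3} (hf : Supp f a) (m : ℕ) :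
    Supp (f ^ m) ((m : ZMod 3) * a) := by
  induction m with
  | zero =>
    intro n hn
    simp only [pow_zero] at hn
    rw [PowerSeries.coeff_one] at hn
    simp only [ne_eq, ite_eq_right_iff, one_ne_zero] at hn
    by_cases h0 : n = 0
    · subst h0; simp
    · exact absurd h0 (by intro h; exact hn h)
  | succ k ih =>
    have := supp_mul ih hf
    rw [pow_succ]
    convert this using 1
    push_cast
    ring

lemma supp_one_sub_X_pow (j : ℕ) (hj : (j : ZMod 3) = 0) :
    Supp (1 - (PowerSeries.X : PowerSeries (ZMod 3)) ^ j) 0 := by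
  intro n hn
  rw [map_sub, PowerSeries.coeff_one, PowerSeries.coeff_X_pow] at hn
  by_cases h0 : n = 0
  · subst h0; simp
  · by_cases h1 : n = j
    · subst h1; exact hj
    · simp [h0, h1] at hn

lemma supp_X : Supp (PowerSeries.X : PowerSeries (ZMod 3)) 1 := by
  intro n hn
  rw [PowerSeries.coeff_X] at hn
  by_cases h1 : n = 1
  · subst h1; simp
  · simp [h1] at hn

/-- The key factor identity over `ZMod 3`. -/
lemma factor_eq (k : ℕ) :
    (1 - (PowerSeries.X : PowerSeries (ZMod 3)) ^ (k + 1)) ^ 24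
      = (1 - (PowerSeries.X : PowerSeries (ZMod 3)) ^ (3 * (k + 1))) ^ 8 := by
  rw [show (24 : ℕ) = 3 * 8 by norm_num, pow_mul]
  congr 1
  rw [sub_pow_char, one_pow, ← pow_mul, mul_comm]

lemma supp_prod (N : ℕ) :
    Supp (∏ k ∈ Finset.range N,
      (1 - (PowerSeries.X : PowerSeries (ZMod 3)) ^ (k + 1)) ^ 24) 0 := by
  induction N with
  | zero =>
    intro n hn
    simp only [Finset.range_zero, Finset.prod_empty] at hn
    rw [PowerSeries.coeff_one] at hn
    by_cases h0 : n = 0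
    · subst h0; simp
    · simp [h0] at hn
  | succ k ih =>
    rw [Finset.prod_range_succ, factor_eq]
    have hfac : Supp ((1 - (PowerSeries.X : PowerSeries (ZMod 3)) ^ (3 * (k + 1))) ^ 8) 0 := by
      have := supp_pow (supp_one_sub_X_pow (3 * (k + 1))
        (by rw [Nat.cast_mul, ZMod.natCast_self, zero_mul])) 8
      simpa using this
    have := supp_mul ih hfac
    simpa using this

noncomputable def phi : PowerSeries ℤ →+* PowerSeries (ZMod 3) :=
  PowerSeries.map (Int.castRingHom (ZMod 3))

lemma supp_phi_Delta : Supp (phi Delta) 1 := by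
  intro n hn
  have hcoeff : PowerSeries.coeff n (phi Delta)
      = PowerSeries.coeff n
        (PowerSeries.X * ∏ k ∈ Finset.range (n + 1),
          (1 - (PowerSeries.X : PowerSeries (ZMod 3)) ^ (k + 1)) ^ 24) := by
    rw [phi, PowerSeries.coeff_map, Delta, PowerSeries.coeff_mk,
      ← PowerSeries.coeff_map]
    congr 1
    rw [map_mul, map_prod]
    congr 1
    · simp
    · refine Finset.prod_congr rfl fun k _ => ?_
      rw [map_pow, map_sub, map_one, map_pow]
      simp
  rw [hcoeff] at hn
  have := supp_mul supp_X (supp_prod (n + 1)) n hn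
  simpa using this

lemma exponent_mod (s : ℕ) (hs : 0 < s) : (((9 ^ s - 1) / 8 : ℕ) : ZMod 3) = 1 := by
  have h8 : 8 * ((9 ^ s - 1) / 8) = 9 ^ s - 1 := by
    apply Nat.mul_div_cancel'
    have h : 9 ^ s % 8 = 1 := by rw [Nat.pow_mod]; simp
    omega
  have h3 : 9 ^ s % 3 = 0 := by
    rw [Nat.pow_mod]
    simp [hs.ne']
  have h1 : (1 : ℕ) ≤ 9 ^ s := Nat.one_le_pow _ _ (by norm_num)
  have hm : ((9 ^ s - 1) / 8) % 3 = 1 := by omega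
  rw [← ZMod.natCast_mod, hm, Nat.cast_one]

end DeltaAux

/-- If `a_s(n) ≢ 0 (mod 3)` then `n ≡ 1 (mod 3)`. -/
theorem aCoeff_ne_zero_mod_three_imp (s : ℕ) (hs : 0 < s) (n : ℕ)
    (h : ¬ (3 : ℤ) ∣ aCoeff s n) : n % 3 = 1 := by
  set m := (9 ^ s - 1) / 8 with hm
  have hne : PowerSeries.coeff n (DeltaAux.phi Delta ^ m) ≠ 0 := by
    rw [← map_pow, DeltaAux.phi, PowerSeries.coeff_map]
    intro hc
    apply h
    have : ((aCoeff s n : ℤ) : ZMod 3) = 0 := hc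
    exact (ZMod.intCast_zmod_eq_zero_iff_dvd _ 3).mp this
  have hsupp := DeltaAux.supp_pow DeltaAux.supp_phi_Delta m n hne
  rw [DeltaAux.exponent_mod s hs, mul_one] at hsupp
  have hfin : ((n % 3 : ℕ) : ZMod 3) = 1 := by rw [ZMod.natCast_mod]; exact hsupp
  rcases (by omega : n % 3 = 0 ∨ n % 3 = 1 ∨ n % 3 = 2) with h0 | h0 | h0 <;>
    rw [h0] at hfin ⊢ <;> first | rfl | exact absurd hfin (by decide)
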